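/- Let G be a finite group. The order of G is even if and only if there exists an element b ∈ G with b ≠ 1 such that b is conjugate in G to b⁻¹, i.e., there exists g ∈ G with g b g⁻¹ = b⁻¹. -/
import Mathlib


/-- A finite group has even order iff some nontrivial element is conjugate to its inverse. -/
theorem card_even_iff_exists_conj_inv
    {G : Type*} [Group G] [Fintype G] :
    Even (Fintype.card G) ↔
      ∃ b : G, b ≠ 1 ∧ ∃ g : G, g * b * g⁻¹ = b⁻¹ := by
  constructor
  · intro h
    obtain ⟨b, hb⟩ := exists_prime_orderOf_dvd_card 2 (even_iff_two_dvd.mp h)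
    refine ⟨b, ?_, 1, ?_⟩
    · intro hb1; rw [hb1, orderOf_one] at hb; norm_num at hb
    · have hb2 : b ^ 2 = 1 := by rw [← hb]; exact pow_orderOf_eq_one b
      have : b⁻¹ = b := by
        rw [inv_eq_iff_mul_eq_one, ← pow_two]; exact hb2
      simp [this]
  · rintro ⟨b, hb1, g, hg⟩
    by_contra hodd
    rw [Nat.not_odd_iff_even.symm, not_not] at hodd
    -- g² commutes with b
    have h1 : g * b⁻¹ * g⁻¹ = b := by
      rw [show g * b⁻¹ * g⁻¹ = (g * b * g⁻¹)⁻¹ by simp [mul_inv_rev, mul_assoc], hg, inv_inv]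
    have hsq : g ^ 2 * b * (g ^ 2)⁻¹ = b := by
      calc g ^ 2 * b * (g ^ 2)⁻¹ = g * (g * b * g⁻¹) * g⁻¹ := by
            simp [pow_two, mul_inv_rev, mul_assoc]
        _ = g * b⁻¹ * g⁻¹ := by rw [hg]
        _ = b := h1
    have hcomm : ∀ k : ℕ, (g ^ 2) ^ k * b * ((g ^ 2) ^ k)⁻¹ = b := by
      intro k
      induction k with
      | zero => simp
      | succ n ih =>
        have : (g ^ 2) ^ (n + 1) * b * ((g ^ 2) ^ (n + 1))⁻¹
            = g ^ 2 * ((g ^ 2) ^ n * b * ((g ^ 2) ^ n)⁻¹) * (g ^ 2)⁻¹ := by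
          rw [pow_succ']; group
        rw [this, ih, hsq]
    -- orderOf g is odd, so g is a power of g²
    set n := orderOf g with hn
    have hnodd : Odd n := hodd.of_dvd_nat (orderOf_dvd_card)
    obtain ⟨m, hm⟩ := hnodd
    have hgpow : g = (g ^ 2) ^ (m + 1) := by
      rw [← pow_mul]
      have : 2 * (m + 1) = n + 1 := by omega
      rw [this, pow_succ, pow_orderOf_eq_one, one_mul]
    have hbb : b⁻¹ = b := by
      rw [← hg, hgpow, hcomm]
    have hb2 : b ^ 2 = 1 := by
      rw [pow_two]; nth_rewrite 1 [← hbb]; exact inv_mul_cancel b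
    have hdvd : orderOf b ∣ 2 := orderOf_dvd_of_pow_eq_one hb2
    have hob : Odd (orderOf b) := hodd.of_dvd_nat orderOf_dvd_card
    have hone : orderOf b = 1 := by
      rcases (Nat.dvd_prime Nat.prime_two).mp hdvd with h | h
      · exact h
      · exact absurd (h ▸ hob) (by norm_num)
    exact hb1 (orderOf_eq_one_iff.mp hone)
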